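/- Let V be a finite type, S ⊆ V, t ∉ S, and c : V → V → ℝ nonnegative capacities (c u v ≥ 0 for all u, v). Let f be a feasible preflow: f is antisymmetric, f u v ≤ c u v for all u, v, and inflow_f(v) ≥ 0 for every v ∉ S. Then there exists a feasible flow f' from S to t of the same value: f' is antisymmetric, f' u v ≤ c u v for all u, v, inflow_{f'}(v) = 0 for every v ∉ S ∪ {t}, and inflow_{f'}(t) = inflow_f(t). -/

import Mathlib

open Finset

set_option linter.unusedSectionVars false

namespace PreflowToFlowAux

variable {V : Type*} [Fintype V] [DecidableEq V]

/-- Count of occurrences of the directed edge `(u,w)` as consecutive elements of `l`. -/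
def cnt : List V → V → V → ℕ
  | a :: b :: r, u, w => (if a = u ∧ b = w then 1 else 0) + cnt (b :: r) u w
  | _, _, _ => 0

lemma cnt_nil (u w : V) : cnt ([] : List V) u w = 0 := rfl
lemma cnt_single (a u w : V) : cnt ([a] : List V) u w = 0 := rfl
lemma cnt_cons (a b : V) (r : List V) (u w : V) :
    cnt (a :: b :: r) u w = (if a = u ∧ b = w then 1 else 0) + cnt (b :: r) u w := rfl

lemma cnt_le_length : ∀ (l : List V) (u w : V), cnt l u w ≤ l.length
  | [], _, _ => Nat.zero_le _
  | [_], _, _ => Nat.zero_le _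
  | a :: b :: r, u, w => by
      rw [cnt_cons]
      have := cnt_le_length (b :: r) u w
      simp only [List.length_cons] at *
      split <;> omega

lemma pos_of_cnt_pos {g : V → V → ℝ} :
    ∀ (l : List V), List.Chain' (fun a b => 0 < g a b) l →
      ∀ u w, 0 < cnt l u w → 0 < g u w
  | [], _, u, w, h => by simp [cnt_nil] at h
  | [a], _, u, w, h => by simp [cnt_single] at h
  | a :: b :: r, hch, u, w, h => by
      rw [cnt_cons] at h
      rcases List.isChain_cons_cons.1 hch with ⟨hab, hch'⟩
      by_cases hc : a = u ∧ b = w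
      · rcases hc with ⟨rfl, rfl⟩; exact hab
      · rw [if_neg hc] at h
        exact pos_of_cnt_pos (b :: r) hch' u w (by omega)

/-- The net "path direction" function. -/
noncomputable def dfun (l : List V) (u w : V) : ℝ := (cnt l u w : ℝ) - (cnt l w u : ℝ)

lemma dfun_antisymm (l : List V) (u w : V) : dfun l u w = -dfun l w u := by
  simp only [dfun]; ring

/-- Telescoping: the net in-degree of `x` in the walk `a :: r` is `[x = last] - [x = a]`. -/
lemma sum_dfun : ∀ (r : List V) (a x : V),
    ∑ u, dfun (a :: r) u x =
      (if x = (a :: r).getLast (List.cons_ne_nil a r) then (1 : ℝ) else 0) -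
      (if x = a then (1 : ℝ) else 0)
  | [], a, x => by
      simp [dfun, cnt_single]
      by_cases h : x = a <;> simp [h]
  | b :: r, a, x => by
      have key : ∀ u, dfun (a :: b :: r) u x =
          ((if x = b ∧ a = u then (1:ℝ) else 0) - (if x = a ∧ b = u then (1:ℝ) else 0))
            + dfun (b :: r) u x := by
        intro u
        simp only [dfun, cnt_cons]
        push_cast
        have e1 : (if a = u ∧ b = x then (1:ℝ) else 0) = if x = b ∧ a = u then 1 else 0 := by
          simp only [eq_comm, and_comm]
        have e2 : (if a = x ∧ b = u then (1:ℝ) else 0) = if x = a ∧ b = u then 1 else 0 := by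
          simp only [eq_comm]
        rw [e1, e2]; ring
      rw [Finset.sum_congr rfl fun u _ => key u, Finset.sum_add_distrib,
        Finset.sum_sub_distrib, sum_dfun r b x]
      have h1 : (∑ u : V, if x = b ∧ a = u then (1:ℝ) else 0) = if x = b then 1 else 0 := by
        by_cases h : x = b <;> simp [h, ite_and, Finset.sum_ite_eq]
      have h2 : (∑ u : V, if x = a ∧ b = u then (1:ℝ) else 0) = if x = a then 1 else 0 := by
        by_cases h : x = a <;> simp [h, ite_and, Finset.sum_ite_eq]
      rw [h1, h2, List.getLast_cons_cons]
      ring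

/-- Augmentation along a walk with positive flow on each edge: the inflow at the
endpoint can be strictly decreased (by any sufficiently small amount), the inflow at the
start increased, with all other inflows unchanged and feasibility preserved. -/
lemma augment (c g : V → V → ℝ) (hc : ∀ u v, 0 ≤ c u v)
    (hgc : ∀ u v, g u v ≤ c u v) (hanti : ∀ u v, g u v = -g v u)
    (s v : V) (hsv : s ≠ v) (r : List V)
    (hchain : List.Chain' (fun a b => 0 < g a b) (s :: r))
    (hlast : (s :: r).getLast (List.cons_ne_nil s r) = v)
    (e : ℝ) (he : 0 < e) :
    ∃ ε : ℝ, ∃ g' : V → V → ℝ, 0 < ε ∧ ε ≤ e ∧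
      (∀ u w, g' u w = -g' w u) ∧ (∀ u w, g' u w ≤ c u w) ∧
      (∀ x, x ≠ s → x ≠ v → ∑ u, g' u x = ∑ u, g u x) ∧
      (∑ u, g' u v = (∑ u, g u v) - ε) := by
  classical
  set l : List V := s :: r with hl
  set N : ℝ := (l.length : ℝ) with hN
  have hNpos : 0 < N := by
    have : 0 < l.length := by rw [hl]; simp
    rw [hN]; exact_mod_cast this
  -- edges of the walk
  set E : Finset (V × V) := Finset.univ.filter (fun p : V × V => 0 < cnt l p.1 p.2) with hE
  have hsum_v : ∑ u, dfun l u v = 1 := by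
    rw [hl, sum_dfun r s v, hlast]
    simp [Ne.symm hsv]
  have hEne : E.Nonempty := by
    by_contra hemp
    have hzero : ∀ p : V × V, cnt l p.1 p.2 = 0 := by
      intro p
      by_contra hp
      exact hemp ⟨p, Finset.mem_filter.2 ⟨Finset.mem_univ _, Nat.pos_of_ne_zero hp⟩⟩
    have : ∑ u, dfun l u v = 0 := by
      apply Finset.sum_eq_zero
      intro u _
      simp [dfun, hzero (u, v), hzero (v, u)]
    rw [hsum_v] at this; norm_num at this
  set ε : ℝ := min e (E.inf' hEne fun p => g p.1 p.2 / N) with hε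
  have hεpos : 0 < ε := by
    apply lt_min he
    rw [Finset.lt_inf'_iff]
    intro p hp
    have hcp : 0 < cnt l p.1 p.2 := (Finset.mem_filter.1 hp).2
    have := pos_of_cnt_pos l hchain p.1 p.2 hcp
    exact div_pos this hNpos
  have hεe : ε ≤ e := min_le_left _ _
  -- the key bound
  have hkey : ∀ u w, 0 < dfun l u w → ε * dfun l u w ≤ g u w := by
    intro u w hd
    have hcnt : 0 < cnt l u w := by
      by_contra h
      have : cnt l u w = 0 := by omega
      simp [dfun, this] at hd
      have : (0:ℝ) ≤ (cnt l w u : ℝ) := by positivity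
      linarith
    have hmem : (u, w) ∈ E := Finset.mem_filter.2 ⟨Finset.mem_univ _, hcnt⟩
    have hεle : ε ≤ g u w / N :=
      le_trans (min_le_right _ _) (Finset.inf'_le _ hmem)
    have hdN : dfun l u w ≤ N := by
      have h1 : (cnt l u w : ℝ) ≤ N := by
        rw [hN]; exact_mod_cast cnt_le_length l u w
      have h2 : (0:ℝ) ≤ (cnt l w u : ℝ) := by positivity
      simp only [dfun]; linarith
    have hguw : 0 < g u w := pos_of_cnt_pos l hchain u w hcnt
    calc ε * dfun l u w ≤ (g u w / N) * N := by
          exact mul_le_mul hεle hdN (le_of_lt hd) (le_of_lt (div_pos hguw hNpos))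
      _ = g u w := by field_simp
  refine ⟨ε, fun u w => g u w - ε * dfun l u w, hεpos, hεe, ?_, ?_, ?_, ?_⟩
  · intro u w
    show g u w - ε * dfun l u w = -(g w u - ε * dfun l w u)
    rw [hanti u w, dfun_antisymm]; ring
  · intro u w
    show g u w - ε * dfun l u w ≤ c u w
    rcases lt_trichotomy (dfun l u w) 0 with hd | hd | hd
    · have hd' : 0 < dfun l w u := by rw [dfun_antisymm] at hd; linarith
      have := hkey w u hd'
      have hrw : g u w - ε * dfun l u w = -(g w u - ε * dfun l w u) := by
        rw [hanti u w, dfun_antisymm]; ring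
      rw [hrw]
      have : 0 ≤ g w u - ε * dfun l w u := by linarith
      linarith [hc u w]
    · rw [hd]; simpa using hgc u w
    · have : 0 ≤ ε * dfun l u w := le_of_lt (mul_pos hεpos hd)
      linarith [hgc u w]
  · intro x hxs hxv
    show (∑ u, (g u x - ε * dfun l u x)) = ∑ u, g u x
    rw [Finset.sum_sub_distrib, ← Finset.mul_sum, hl, sum_dfun r s x, hlast]
    simp [hxv, hxs]
  · show (∑ u, (g u v - ε * dfun l u v)) = (∑ u, g u v) - ε
    rw [Finset.sum_sub_distrib, ← Finset.mul_sum, hsum_v]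
    ring

/-- If a vertex outside the sources has positive inflow, there is a positive-flow
walk to it from some source. -/
lemma exists_source_path (g : V → V → ℝ) (hanti : ∀ u v, g u v = -g v u)
    (S : Finset V) (hpre : ∀ x, x ∉ S → 0 ≤ ∑ u, g u x)
    (v : V) (_hv : v ∉ S) (hpos : 0 < ∑ u, g u v) :
    ∃ s ∈ S, Relation.ReflTransGen (fun a b => 0 < g a b) s v := by
  classical
  by_contra hcon
  push_neg at hcon
  set P : V → V → Prop := fun a b => 0 < g a b with hP
  set A : Finset V := Finset.univ.filter (fun u => Relation.ReflTransGen P u v) with hA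
  have hvA : v ∈ A := Finset.mem_filter.2 ⟨Finset.mem_univ _, Relation.ReflTransGen.refl⟩
  have hAS : ∀ x ∈ A, x ∉ S := by
    intro x hx hxS
    exact hcon x hxS (Finset.mem_filter.1 hx).2
  -- total inflow into A is positive
  have hposA : 0 < ∑ x ∈ A, ∑ u, g u x := by
    apply Finset.sum_pos' (fun x hx => hpre x (hAS x hx)) ⟨v, hvA, hpos⟩
  -- split the inner sums
  have hsplit : ∀ x, (∑ u, g u x) = (∑ u ∈ A, g u x) + ∑ u ∈ Aᶜ, g u x := by
    intro x
    rw [Finset.sum_add_sum_compl]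
  have hinternal : ∑ x ∈ A, ∑ u ∈ A, g u x = 0 := by
    have hneg : ∑ x ∈ A, ∑ u ∈ A, g u x = -∑ x ∈ A, ∑ u ∈ A, g u x := by
      nth_rewrite 1 [Finset.sum_comm]
      rw [← Finset.sum_neg_distrib]
      apply Finset.sum_congr rfl
      intro x _
      rw [← Finset.sum_neg_distrib]
      exact Finset.sum_congr rfl fun u _ => by rw [hanti]
    linarith
  have hcross : ∑ x ∈ A, ∑ u ∈ Aᶜ, g u x ≤ 0 := by
    apply Finset.sum_nonpos
    intro x hx
    apply Finset.sum_nonpos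
    intro u hu
    by_contra hg
    push_neg at hg
    have hgux : 0 < g u x := hg
    have hxv : Relation.ReflTransGen P x v := (Finset.mem_filter.1 hx).2
    have huv : Relation.ReflTransGen P u v := Relation.ReflTransGen.head hgux hxv
    have : u ∈ A := Finset.mem_filter.2 ⟨Finset.mem_univ _, huv⟩
    simp [this] at hu
  have : ∑ x ∈ A, ∑ u, g u x ≤ 0 := by
    calc ∑ x ∈ A, ∑ u, g u x
        = (∑ x ∈ A, ∑ u ∈ A, g u x) + ∑ x ∈ A, ∑ u ∈ Aᶜ, g u x := by
          rw [← Finset.sum_add_distrib]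
          exact Finset.sum_congr rfl fun x _ => hsplit x
      _ ≤ 0 := by rw [hinternal]; linarith
  linarith

end PreflowToFlowAux

open PreflowToFlowAux

/-- Any feasible preflow (with respect to nonnegative capacities `c`, sources `S`
and sink `t`) can be converted into a feasible flow of the same value. -/
theorem feasible_preflow_to_feasible_flow
    {V : Type*} [Fintype V] [DecidableEq V] (S : Finset V) (t : V) (ht : t ∉ S)
    (c : V → V → ℝ) (hc : ∀ u v, 0 ≤ c u v)
    (f : V → V → ℝ)
    (hanti : ∀ u v, f u v = -f v u)
    (hfeas : ∀ u v, f u v ≤ c u v)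
    (hpre : ∀ v, v ∉ S → 0 ≤ ∑ u, f u v) :
    ∃ f' : V → V → ℝ,
      (∀ u v, f' u v = -f' v u) ∧
      (∀ u v, f' u v ≤ c u v) ∧
      (∀ v, v ∉ S ∪ {t} → ∑ u, f' u v = 0) ∧
      ∑ u, f' u t = ∑ u, f u t := by
  classical
  -- The set of feasible preflows with the same value at `t`.
  set K : Set (V → V → ℝ) := {g | (∀ u v, g u v = -g v u) ∧ (∀ u v, g u v ≤ c u v) ∧
      (∀ v, v ∉ S → 0 ≤ ∑ u, g u v) ∧ (∑ u, g u t = ∑ u, f u t)} with hK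
  have hfK : f ∈ K := ⟨hanti, hfeas, hpre, rfl⟩
  -- K is closed
  have hKclosed : IsClosed K := by
    have h1 : IsClosed {g : V → V → ℝ | ∀ u v, g u v = -g v u} := by
      rw [Set.setOf_forall]
      apply isClosed_iInter; intro u
      rw [Set.setOf_forall]
      apply isClosed_iInter; intro v
      exact isClosed_eq (by fun_prop) (by fun_prop)
    have h2 : IsClosed {g : V → V → ℝ | ∀ u v, g u v ≤ c u v} := by
      rw [Set.setOf_forall]
      apply isClosed_iInter; intro u
      rw [Set.setOf_forall]
      apply isClosed_iInter; intro v
      exact isClosed_le (by fun_prop) continuous_const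
    have h3 : IsClosed {g : V → V → ℝ | ∀ v, v ∉ S → 0 ≤ ∑ u, g u v} := by
      rw [Set.setOf_forall]
      apply isClosed_iInter; intro v
      by_cases hvS : v ∈ S
      · simp [hvS]
      · simp only [hvS, not_false_iff, forall_true_left]
        exact isClosed_le continuous_const (by fun_prop)
    have h4 : IsClosed {g : V → V → ℝ | ∑ u, g u t = ∑ u, f u t} :=
      isClosed_eq (by fun_prop) continuous_const
    have hKeq : K = {g : V → V → ℝ | ∀ u v, g u v = -g v u} ∩
        ({g | ∀ u v, g u v ≤ c u v} ∩
          ({g | ∀ v, v ∉ S → 0 ≤ ∑ u, g u v} ∩ {g | ∑ u, g u t = ∑ u, f u t})) := by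
      ext g
      simp only [hK, Set.mem_setOf_eq, Set.mem_inter_iff, and_assoc]
    rw [hKeq]
    exact h1.inter (h2.inter (h3.inter h4))
  -- K is compact
  have hKcomp : IsCompact K := by
    have hbox : IsCompact (Set.pi Set.univ fun u : V =>
        Set.pi Set.univ fun v : V => Set.Icc (-(c v u)) (c u v)) :=
      isCompact_univ_pi fun u => isCompact_univ_pi fun v => isCompact_Icc
    apply hbox.of_isClosed_subset hKclosed
    intro g hg
    rw [Set.mem_univ_pi]
    intro u
    rw [Set.mem_univ_pi]
    intro v
    exact ⟨by rw [hg.1 u v]; simp; linarith [hg.2.1 v u], hg.2.1 u v⟩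
  -- minimize the total excess over K
  set T : Finset V := (S ∪ {t})ᶜ with hT
  set Φ : (V → V → ℝ) → ℝ := fun g => ∑ x ∈ T, ∑ u, g u x with hΦ
  have hΦcont : Continuous Φ := by fun_prop
  obtain ⟨g₀, hg₀K, hmin⟩ := hKcomp.exists_isMinOn ⟨f, hfK⟩ hΦcont.continuousOn
  obtain ⟨hg₀anti, hg₀c, hg₀pre, hg₀t⟩ := hg₀K
  refine ⟨g₀, hg₀anti, hg₀c, ?_, hg₀t⟩
  by_contra hcon
  push_neg at hcon
  obtain ⟨v, hvST, hvne⟩ := hcon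
  have hvS : v ∉ S := fun h => hvST (Finset.mem_union_left _ h)
  have hvt : v ≠ t := fun h => hvST (Finset.mem_union_right _ (by simp [h]))
  have hvpos : 0 < ∑ u, g₀ u v := lt_of_le_of_ne (hg₀pre v hvS) (Ne.symm hvne)
  obtain ⟨s, hsS, hpath⟩ := exists_source_path g₀ hg₀anti S hg₀pre v hvS hvpos
  have hsv : s ≠ v := fun h => hvS (h ▸ hsS)
  obtain ⟨r, hchain, hlast⟩ := List.exists_isChain_cons_of_relationReflTransGen hpath
  have hchain' : List.Chain' (fun a b => 0 < g₀ a b) (s :: r) := hchain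
  obtain ⟨ε, g', hεpos, hεe, hg'anti, hg'c, hg'other, hg'v⟩ :=
    augment c g₀ hc hg₀c hg₀anti s v hsv r hchain' hlast (∑ u, g₀ u v) hvpos
  have hts : t ≠ s := fun h => ht (h ▸ hsS)
  have hg'K : g' ∈ K := by
    refine ⟨hg'anti, hg'c, ?_, ?_⟩
    · intro x hxS
      by_cases hxv : x = v
      · subst hxv; rw [hg'v]; linarith
      · rw [hg'other x (fun h => hxS (h ▸ hsS)) hxv]
        exact hg₀pre x hxS
    · rw [hg'other t hts (Ne.symm hvt)]
      exact hg₀t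
  have hvT : v ∈ T := Finset.mem_compl.2 hvST
  have hdiff : Φ g' - Φ g₀ = -ε := by
    have : Φ g' - Φ g₀ = ∑ x ∈ T, ((∑ u, g' u x) - ∑ u, g₀ u x) := by
      rw [Finset.sum_sub_distrib]
    rw [this, Finset.sum_eq_single_of_mem v hvT]
    · rw [hg'v]; ring
    · intro x hxT hxv
      have hxS : x ∉ S := fun h => (Finset.mem_compl.1 hxT) (Finset.mem_union_left _ h)
      rw [hg'other x (fun h => hxS (h ▸ hsS)) hxv]
      ring
  have hle : Φ g₀ ≤ Φ g' := hmin hg'K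
  linarith
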